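/- With w_n(Δ) = 2^{-n}Γ(n+2α)Γ(α)²/(Γ(n0+α)Γ(n1+α)Γ(2α)) where n0 = n(1/2+Δ), n1 = n(1/2−Δ): if n0/n → q0 ≠ 1/2, then for every c with |c| < |q0 − 1/2|, e^{2nc²}·w_n(Δ_n) → 0 as n → ∞. -/

import Mathlib

open Filter

open Real Finset in
/-- The weight w(n0,n1) = 2^{-(n0+n1)}·Γ(n0+n1+2α)·Γ(α)²/(Γ(n0+α)Γ(n1+α)Γ(2α)). -/
noncomputable def wght (α : ℝ) (n0 n1 : ℕ) : ℝ :=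
  Real.Gamma ((n0 + n1 : ℕ) + 2 * α) * (Real.Gamma α)^2 /
    (2^(n0 + n1) * Real.Gamma ((n0 : ℝ) + α) * Real.Gamma ((n1 : ℝ) + α) *
      Real.Gamma (2 * α))

section Aux
open Real Finset

-- Gamma product identity
lemma gammaProd {x : ℝ} (hx : 0 < x) (k : ℕ) :
    Real.Gamma ((k : ℝ) + x) = (∏ j ∈ Finset.range k, (x + j)) * Real.Gamma x := by
  induction k with
  | zero => simp
  | succ k ih =>
    have h : ((k + 1 : ℕ) : ℝ) + x = ((k : ℝ) + x) + 1 := by push_cast; ring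
    rw [h, Real.Gamma_add_one (by positivity), ih, Finset.prod_range_succ]
    ring

-- nat identities
lemma natP1 (s : ℕ) : ∀ n : ℕ, (∏ j ∈ Finset.range n, (j + s + 1)) * (Nat.factorial s) = Nat.factorial (n+s) := by
  intro n
  induction n with
  | zero => simp
  | succ n ih =>
    rw [Finset.prod_range_succ, mul_right_comm, ih]
    show Nat.factorial (n+s) * (n + s + 1) = Nat.factorial (n+1+s)
    rw [show n + 1 + s = (n + s) + 1 by ring, Nat.factorial_succ]; ring

lemma natP2 (n : ℕ) : ∀ s : ℕ, Nat.factorial (n+s) ≤ Nat.factorial n * (n + 1 + s) ^ s := by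
  intro s
  induction s with
  | zero => simp
  | succ s ih =>
    rw [show n + (s+1) = (n + s) + 1 by ring, Nat.factorial_succ]
    calc (n + s + 1) * Nat.factorial (n+s) ≤ (n + s + 1) * ((Nat.factorial n) * (n + 1 + s)^s) :=
          Nat.mul_le_mul_left _ ih
      _ ≤ (n + 1 + (s+1)) * ((Nat.factorial n) * (n + 1 + (s+1))^s) := by
          apply Nat.mul_le_mul (by omega)
          exact Nat.mul_le_mul_left _ (Nat.pow_le_pow_left (by omega) s)
      _ = Nat.factorial n * (n + 1 + (s+1))^(s+1) := by ring

-- upper bound on product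
lemma prodUB {α : ℝ} (hα : 0 < α) (n : ℕ) :
    (∏ j ∈ Finset.range n, (2*α + j)) ≤
      ((Nat.factorial n) : ℝ) * ((n : ℝ) + 1 + ⌈2*α⌉₊) ^ (⌈2*α⌉₊ : ℕ) := by
  set s : ℕ := ⌈2*α⌉₊
  calc (∏ j ∈ Finset.range n, (2*α + j)) ≤ ∏ j ∈ Finset.range n, ((j : ℝ) + s + 1) := by
        apply Finset.prod_le_prod
        · intro j _; positivity
        · intro j _
          have := Nat.le_ceil (2*α)
          push_cast
          linarith [this]
    _ = ((∏ j ∈ Finset.range n, (j + s + 1) : ℕ) : ℝ) := by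
        push_cast
        exact Finset.prod_congr rfl fun x _ => by ring
    _ ≤ (Nat.factorial (n+s) : ℝ) := by
        rw [← natP1 s n]
        exact_mod_cast Nat.le_mul_of_pos_right _ (Nat.factorial_pos s)
    _ ≤ (((Nat.factorial n) * (n + 1 + s) ^ s : ℕ) : ℝ) := by exact_mod_cast natP2 n s
    _ = ((Nat.factorial n) : ℝ) * ((n : ℝ) + 1 + s) ^ s := by push_cast; ring

-- lower bound on product
lemma prodLB {α : ℝ} (hα : 0 < α) (k : ℕ) :
    min α 1 * ((Nat.factorial k) : ℝ) ≤ ((k : ℝ) + 1) * ∏ j ∈ Finset.range k, (α + j) := by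
  cases k with
  | zero => simp [min_le_iff]
  | succ k =>
    have h1 : (∏ j ∈ Finset.range (k+1), (α + j)) =
        (∏ j ∈ Finset.range k, (α + (j+1))) * α := by
      rw [Finset.prod_range_succ']
      push_cast
      rw [add_zero]
    have h2 : ((Nat.factorial k) : ℝ) ≤ ∏ j ∈ Finset.range k, (α + (j+1)) := by
      calc ((Nat.factorial k) : ℝ) = ∏ j ∈ Finset.range k, ((j : ℝ) + 1) := by
            norm_cast
            exact (Finset.prod_range_add_one_eq_factorial k).symm
        _ ≤ _ := by
            apply Finset.prod_le_prod
            · intro j _; positivity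
            · intro j _; push_cast; linarith
    have hmin : min α 1 ≤ α := min_le_left _ _
    have hk : ((k+1:ℕ):ℝ) + 1 = (k:ℝ) + 2 := by push_cast; ring
    rw [h1, hk]
    calc min α 1 * ((Nat.factorial (k+1)) : ℝ) = min α 1 * ((k:ℝ)+1) * ((Nat.factorial k) : ℝ) := by
          rw [Nat.factorial_succ]; push_cast; ring
      _ ≤ α * ((k:ℝ)+2) * ((Nat.factorial k) : ℝ) := by
          apply mul_le_mul_of_nonneg_right _ (by positivity)
          have : min α 1 * ((k:ℝ)+1) ≤ α * ((k:ℝ)+1) :=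
            mul_le_mul_of_nonneg_right hmin (by positivity)
          nlinarith [hα]
      _ ≤ ((k:ℝ)+2) * ((∏ j ∈ Finset.range k, (α + (j+1))) * α) := by
          nlinarith [mul_le_mul_of_nonneg_left h2 (le_of_lt hα)]
section Aux
open Real Finset

lemma wght_eq {α : ℝ} (hα : 0 < α) (k m : ℕ) :
    wght α k m = (∏ j ∈ Finset.range (k+m), (2*α + j)) /
      (2^(k+m) * (∏ j ∈ Finset.range k, (α + j)) * (∏ j ∈ Finset.range m, (α + j))) := by
  have h2α : (0:ℝ) < 2*α := by linarith
  have hN : Real.Gamma ((k + m : ℕ) + 2*α)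
      = (∏ j ∈ Finset.range (k+m), (2*α + j)) * Real.Gamma (2*α) := gammaProd h2α (k+m)
  have hK : Real.Gamma ((k : ℝ) + α) = (∏ j ∈ Finset.range k, (α + j)) * Real.Gamma α :=
    gammaProd hα k
  have hM : Real.Gamma ((m : ℝ) + α) = (∏ j ∈ Finset.range m, (α + j)) * Real.Gamma α :=
    gammaProd hα m
  have hGα : Real.Gamma α ≠ 0 := (Real.Gamma_pos_of_pos hα).ne'
  have hG2α : Real.Gamma (2*α) ≠ 0 := (Real.Gamma_pos_of_pos h2α).ne'
  have hPK : (0:ℝ) < ∏ j ∈ Finset.range k, (α + j) :=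
    Finset.prod_pos fun j _ => by positivity
  have hPM : (0:ℝ) < ∏ j ∈ Finset.range m, (α + j) :=
    Finset.prod_pos fun j _ => by positivity
  rw [wght, hN, hK, hM]
  field_simp

lemma wght_le {α : ℝ} (hα : 0 < α) (k m : ℕ) :
    wght α k m ≤ (min α 1)⁻¹^2 * (((k+m : ℕ) : ℝ) + 1 + ⌈2*α⌉₊)^(⌈2*α⌉₊ + 2) *
      ((k+m).choose k) / 2^(k+m) := by
  set s : ℕ := ⌈2*α⌉₊ with hs
  set n : ℕ := k + m with hn
  set X : ℝ := (n : ℝ) + 1 + s with hX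
  set PK : ℝ := ∏ j ∈ Finset.range k, (α + j) with hPKd
  set PM : ℝ := ∏ j ∈ Finset.range m, (α + j) with hPMd
  set PN : ℝ := ∏ j ∈ Finset.range n, (2*α + j) with hPNd
  have hμ : (0:ℝ) < min α 1 := lt_min hα one_pos
  have hPK : (0:ℝ) < PK := Finset.prod_pos fun j _ => by positivity
  have hPM : (0:ℝ) < PM := Finset.prod_pos fun j _ => by positivity
  have hX0 : (0:ℝ) < X := by positivity
  have hkX : ((k:ℝ) + 1) ≤ X := by
    have : (k:ℝ) ≤ (n:ℝ) := by exact_mod_cast Nat.le.intro rfl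
    simp only [hX]; push_cast; linarith [Nat.cast_nonneg (α := ℝ) s]
  have hmX : ((m:ℝ) + 1) ≤ X := by
    have : (m:ℝ) ≤ (n:ℝ) := by exact_mod_cast Nat.le_add_left m k
    simp only [hX]; push_cast; linarith [Nat.cast_nonneg (α := ℝ) s]
  have hfact : (Nat.factorial n : ℝ) = (n.choose k : ℝ) * (Nat.factorial k * Nat.factorial m) := by
    have h := Nat.choose_mul_factorial_mul_factorial (show k ≤ k + m from Nat.le_add_right k m)
    rw [Nat.add_sub_cancel_left] at h
    rw [hn]
    rw [← mul_assoc]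
    exact_mod_cast (congrArg (fun x : ℕ => (x : ℝ)) h).symm
  have hKfac : (Nat.factorial k : ℝ) ≤ (min α 1)⁻¹ * ((k:ℝ)+1) * PK := by
    rw [inv_mul_eq_div, div_mul_eq_mul_div, le_div_iff₀ hμ]
    linarith [prodLB hα k]
  have hMfac : (Nat.factorial m : ℝ) ≤ (min α 1)⁻¹ * ((m:ℝ)+1) * PM := by
    rw [inv_mul_eq_div, div_mul_eq_mul_div, le_div_iff₀ hμ]
    linarith [prodLB hα m]
  have core : PN ≤ (min α 1)⁻¹^2 * X^(s+2) * (n.choose k) * PK * PM := by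
    calc PN ≤ (Nat.factorial n : ℝ) * X^s := prodUB hα n
      _ = (n.choose k : ℝ) * ((Nat.factorial k : ℝ) * (Nat.factorial m : ℝ)) * X^s := by
          rw [hfact]
      _ ≤ (n.choose k : ℝ) * (((min α 1)⁻¹ * ((k:ℝ)+1) * PK) * ((min α 1)⁻¹ * ((m:ℝ)+1) * PM)) * X^s := by
          apply mul_le_mul_of_nonneg_right _ (by positivity)
          apply mul_le_mul_of_nonneg_left _ (by positivity)
          apply mul_le_mul hKfac hMfac (by positivity) (by positivity)
      _ = ((n.choose k : ℝ) * (min α 1)⁻¹^2 * PK * PM * X^s) * (((k:ℝ)+1) * ((m:ℝ)+1)) := by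
          ring
      _ ≤ ((n.choose k : ℝ) * (min α 1)⁻¹^2 * PK * PM * X^s) * (X * X) := by
          apply mul_le_mul_of_nonneg_left _ (by positivity)
          apply mul_le_mul hkX hmX (by positivity) (le_of_lt hX0)
      _ = (min α 1)⁻¹^2 * X^(s+2) * (n.choose k) * PK * PM := by
          rw [pow_add]; ring
  rw [wght_eq hα k m, ← hn, ← hPKd, ← hPMd, ← hPNd]
  rw [div_le_div_iff₀ (by positivity) (by positivity)]
  calc PN * 2^n ≤ ((min α 1)⁻¹^2 * X^(s+2) * (n.choose k) * PK * PM) * 2^n :=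
        mul_le_mul_of_nonneg_right core (by positivity)
    _ = (min α 1)⁻¹ ^ 2 * X ^ (s + 2) * ((n.choose k) : ℝ) * (2 ^ n * PK * PM) := by ring

lemma choose_le_exp (n k : ℕ) (hn : 0 < n) (hk : k ≤ n) :
    (n.choose k : ℝ) ≤ Real.exp (n * Real.binEntropy (k / n)) := by
  rcases Nat.eq_zero_or_pos k with hk0 | hkpos
  · subst hk0; simp [Real.binEntropy_zero]
  rcases eq_or_lt_of_le hk with hkn | hkn
  · subst hkn; simp [Real.binEntropy_one, div_self (by positivity : ((k:ℝ)) ≠ 0)]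
  set q : ℝ := (k : ℝ) / n with hq
  have hn' : (0:ℝ) < n := by exact_mod_cast hn
  have hq0 : 0 < q := by positivity
  have hq1 : q < 1 := by rw [hq, div_lt_one hn']; exact_mod_cast hkn
  have hq1' : 0 < 1 - q := by linarith
  have key : (n.choose k : ℝ) * (q ^ k * (1-q) ^ (n-k)) ≤ 1 := by
    have hsum : (q + (1-q))^n = ∑ i ∈ Finset.range (n+1), q^i * (1-q)^(n-i) * (n.choose i) :=
      add_pow q (1-q) n
    have h1 : (q + (1-q))^n = 1 := by norm_num
    have hmem : k ∈ Finset.range (n+1) := Finset.mem_range.mpr (by omega)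
    have hterm := Finset.single_le_sum
      (f := fun i => q^i * (1-q)^(n-i) * (n.choose i : ℝ))
      (fun i _ => by positivity) hmem
    rw [← hsum, h1] at hterm
    have hterm' : q ^ k * (1 - q) ^ (n - k) * (n.choose k : ℝ) ≤ 1 := by simpa using hterm
    calc (n.choose k : ℝ) * (q^k*(1-q)^(n-k)) = q^k*(1-q)^(n-k)*(n.choose k:ℝ) := by ring
      _ ≤ 1 := hterm'
  have hnq : (n:ℝ) * q = k := by rw [hq]; field_simp
  have hnq' : (n:ℝ) * (1 - q) = ((n - k : ℕ) : ℝ) := by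
    rw [Nat.cast_sub hk, hq]; field_simp
  have hexp : Real.exp (n * Real.binEntropy q) = (q⁻¹)^k * ((1-q)⁻¹)^(n-k) := by
    rw [Real.binEntropy]
    rw [show (n:ℝ) * (q * Real.log q⁻¹ + (1 - q) * Real.log (1-q)⁻¹)
        = (k:ℝ) * Real.log q⁻¹ + ((n - k : ℕ):ℝ) * Real.log (1-q)⁻¹ by
      rw [← hnq, ← hnq']; ring]
    rw [Real.exp_add, Real.exp_nat_mul, Real.exp_nat_mul,
      Real.exp_log (by positivity), Real.exp_log (by positivity)]
  rw [hexp, inv_pow, inv_pow, ← one_div, ← one_div, mul_comm ((1:ℝ)/q^k) _,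
    div_mul_div_comm, one_mul, le_div_iff₀ (by positivity)]
  calc (n.choose k : ℝ) * ((1-q)^(n-k) * q^k) = (n.choose k : ℝ) * (q^k * (1-q)^(n-k)) := by ring
    _ ≤ 1 := key

lemma pinsker {p : ℝ} (h0 : 0 ≤ p) (h1 : p ≤ 1) :
    Real.binEntropy p + 2 * (p - 1/2)^2 ≤ Real.log 2 := by
  have main : ∀ p : ℝ, 1/2 ≤ p → p ≤ 1 → Real.binEntropy p + 2 * (p - 1/2)^2 ≤ Real.log 2 := by
    intro p hp2 hp1
    set G : ℝ → ℝ := fun x => Real.log x - Real.log (1-x) - 4*x + 2 with hGdef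
    have hG : ∀ q ∈ Set.Ico (1/2 : ℝ) 1, 0 ≤ G q := by
      have hmono : MonotoneOn G (Set.Ico (1/2 : ℝ) 1) := by
        apply monotoneOn_of_deriv_nonneg (convex_Ico _ _)
        · have c1 : ContinuousOn (fun x : ℝ => Real.log x) (Set.Ico (1/2:ℝ) 1) := by
            apply ContinuousOn.log (by fun_prop)
            intro x hx; simp only [Set.mem_Ico] at hx; intro h; rw [h] at hx; linarith [hx.1]
          have c2 : ContinuousOn (fun x : ℝ => Real.log (1-x)) (Set.Ico (1/2:ℝ) 1) := by
            apply ContinuousOn.log (by fun_prop)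
            intro x hx; simp only [Set.mem_Ico] at hx; intro h; nlinarith [hx.1, hx.2]
          exact ((c1.sub c2).sub (by fun_prop)).add (by fun_prop)
        · intro x hx
          rw [interior_Ico] at hx
          simp only [Set.mem_Ioo] at hx
          have hx1 : (0:ℝ) < x := by linarith [hx.1]
          have hx2 : (0:ℝ) < 1 - x := by linarith [hx.2]
          apply DifferentiableAt.differentiableWithinAt
          have d2 : DifferentiableAt ℝ (fun x : ℝ => Real.log (1-x)) x :=
            (Real.differentiableAt_log hx2.ne').comp x (by fun_prop)
          exact (((Real.differentiableAt_log hx1.ne').sub d2).sub (by fun_prop)).add (by fun_prop)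
        · intro x hx
          rw [interior_Ico] at hx
          simp only [Set.mem_Ioo] at hx
          have hx1 : (0:ℝ) < x := by linarith [hx.1]
          have hx2 : (0:ℝ) < 1 - x := by linarith [hx.2]
          have d2 : HasDerivAt (fun x : ℝ => Real.log (1-x)) ((1-x)⁻¹ * (-1)) x := by
            exact (Real.hasDerivAt_log hx2.ne').comp x
              (by simpa using (hasDerivAt_id x).const_sub (1:ℝ))
          have d3 : HasDerivAt (fun x : ℝ => 4*x) 4 x := by
            simpa using (hasDerivAt_id x).const_mul (4:ℝ)
          have hd : HasDerivAt G (x⁻¹ - (1-x)⁻¹ * (-1) - 4) x :=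
            (((Real.hasDerivAt_log hx1.ne').sub d2).sub d3).add_const 2
          rw [hd.deriv]
          have hu : 0 < x*(1-x) := mul_pos hx1 hx2
          have h4 : x * (1-x) ≤ 1/4 := by nlinarith
          have hiden : x⁻¹ + (1-x)⁻¹ = (x*(1-x))⁻¹ := by field_simp; ring
          have hinv : (x*(1-x)) * (x*(1-x))⁻¹ = 1 := mul_inv_cancel₀ hu.ne'
          nlinarith [hinv, h4, hiden, hu]
      intro q hq
      have h0' : G (1/2) = 0 := by simp only [hGdef]; norm_num
      have := hmono (Set.mem_Ico.mpr ⟨le_refl _, by norm_num⟩) hq hq.1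
      rw [h0'] at this
      exact this
    set F : ℝ → ℝ := fun x => Real.log 2 - 2*(x - 1/2)^2 - Real.binEntropy x with hFdef
    have hFmono : MonotoneOn F (Set.Icc (1/2 : ℝ) 1) := by
      apply monotoneOn_of_deriv_nonneg (convex_Icc _ _)
      · exact (ContinuousOn.sub (by fun_prop) Real.binEntropy_continuous.continuousOn)
      · intro x hx
        rw [interior_Icc] at hx
        simp only [Set.mem_Ioo] at hx
        apply DifferentiableAt.differentiableWithinAt
        exact DifferentiableAt.sub (by fun_prop)
          (Real.differentiableAt_binEntropy (by linarith [hx.1]) (ne_of_lt hx.2))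
      · intro x hx
        rw [interior_Icc] at hx
        simp only [Set.mem_Ioo] at hx
        have hx0 : x ≠ 0 := by intro h; rw [h] at hx; linarith [hx.1]
        have hx1 : x ≠ 1 := ne_of_lt hx.2
        have d1 : HasDerivAt (fun x : ℝ => Real.log 2 - 2*(x-1/2)^2) (-(2*(2*(x-1/2)))) x := by
          apply HasDerivAt.const_sub
          have : HasDerivAt (fun x : ℝ => (x-1/2)^2) (2*(x-1/2)) x := by
            simpa using ((hasDerivAt_id x).sub_const (1/2:ℝ)).fun_pow 2
          simpa using this.const_mul (2:ℝ)
        have hd : HasDerivAt F (-(2*(2*(x-1/2))) - (Real.log (1-x) - Real.log x)) x :=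
          d1.sub (Real.hasDerivAt_binEntropy hx0 hx1)
        rw [hd.deriv]
        have := hG x (Set.mem_Ico.mpr ⟨le_of_lt hx.1, hx.2⟩)
        simp only [hGdef] at this
        linarith
    have hF0 : F (1/2) = 0 := by
      simp only [hFdef]
      rw [show (1/2 : ℝ) = 2⁻¹ by norm_num, Real.binEntropy_two_inv]
      norm_num
    have := hFmono (Set.mem_Icc.mpr ⟨le_refl _, by norm_num⟩) (Set.mem_Icc.mpr ⟨hp2, hp1⟩) hp2
    rw [hF0] at this
    simp only [hFdef] at this
    linarith
  rcases le_or_gt (1/2 : ℝ) p with hp | hp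
  · exact main p hp h1
  · have := main (1 - p) (by linarith) (by linarith)
    rw [Real.binEntropy_one_sub] at this
    have h : (1 - p - 1/2)^2 = (p - 1/2)^2 := by ring
    rw [h] at this
    exact this
end Aux

open Real Finset in
/-- If n0/n → q0 ≠ 1/2, then e^{2nc²}·w_n(Δ_n) → 0 for every |c| < |q0 − 1/2|. -/
theorem stmt13 (α : ℝ) (hα : 0 < α) (q0 : ℝ) (hq : q0 ≠ 1/2)
    (n0 : ℕ → ℕ) (hle : ∀ n, n0 n ≤ n)
    (hconv : Tendsto (fun n : ℕ => (n0 n : ℝ) / n) atTop (nhds q0))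
    (c : ℝ) (hc : |c| < |q0 - 1/2|) :
    Tendsto (fun n : ℕ => Real.exp (2 * n * c^2) * wght α (n0 n) (n - n0 n))
      atTop (nhds 0) := by

  set s : ℕ := ⌈2*α⌉₊ with hs
  set C : ℝ := (min α 1)⁻¹^2 with hC
  have hC0 : 0 ≤ C := by positivity
  have hq00 : 0 ≤ q0 := ge_of_tendsto' hconv (fun n => by positivity)
  have hq01 : q0 ≤ 1 := by
    apply le_of_tendsto' hconv
    intro n
    rcases Nat.eq_zero_or_pos n with h | h
    · simp [h]
    · rw [div_le_one (by exact_mod_cast h)]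
      exact_mod_cast hle n
  have hcsq : c^2 < (q0 - 1/2)^2 := by
    rw [← sq_abs c, ← sq_abs (q0 - 1/2)]
    exact pow_lt_pow_left₀ hc (abs_nonneg c) two_ne_zero
  set ε : ℝ := Real.log 2 - Real.binEntropy q0 - 2*c^2 with hε
  have hε0 : 0 < ε := by
    have hp := pinsker hq00 hq01
    simp only [hε]
    nlinarith
  have hBE : Tendsto (fun n : ℕ => Real.binEntropy ((n0 n : ℝ)/n)) atTop
      (nhds (Real.binEntropy q0)) :=
    (Real.binEntropy_continuous.tendsto q0).comp hconv
  have hev : ∀ᶠ n in atTop, Real.binEntropy ((n0 n : ℝ)/n) < Real.binEntropy q0 + ε/2 :=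
    hBE.eventually_lt_const (by linarith)
  set ρ : ℝ := Real.exp (-(ε/2)) with hρ
  have hρ0 : 0 < ρ := Real.exp_pos _
  have hρ1 : ‖ρ‖ < 1 := by
    rw [Real.norm_eq_abs, abs_of_pos hρ0, hρ]
    exact Real.exp_lt_one_iff.mpr (by linarith)
  have hg : Tendsto (fun n : ℕ => C * (((n:ℝ)+1+s)^(s+2) * ρ^n)) atTop (nhds 0) := by
    have base : Tendsto (fun N : ℕ => ((N:ℝ))^(s+2) * ρ^N) atTop (nhds 0) :=
      (summable_pow_mul_geometric_of_norm_lt_one (s+2) hρ1).tendsto_atTop_zero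
    have h2 := base.comp (tendsto_add_atTop_nat (1+s))
    have h3 := h2.const_mul (C * (ρ^(1+s))⁻¹)
    rw [mul_zero] at h3
    apply h3.congr
    intro n
    simp only [Function.comp]
    push_cast
    rw [pow_add ρ n (1+s)]
    field_simp
    ring
  apply squeeze_zero' (g := fun n : ℕ => C * (((n:ℝ)+1+s)^(s+2) * ρ^n)) _ _ hg
  · filter_upwards with n
    have h2α : (0:ℝ) < 2*α := by linarith
    apply mul_nonneg (Real.exp_nonneg _)
    apply le_of_lt
    apply div_pos
    · have := Real.Gamma_pos_of_pos (show (0:ℝ) < ((n0 n + (n - n0 n) : ℕ):ℝ) + 2*α by positivity)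
      have h2 := Real.Gamma_pos_of_pos hα
      positivity
    · have g1 := Real.Gamma_pos_of_pos (show (0:ℝ) < (n0 n : ℝ) + α by positivity)
      have g2 := Real.Gamma_pos_of_pos (show (0:ℝ) < ((n - n0 n : ℕ) : ℝ) + α by positivity)
      have g3 := Real.Gamma_pos_of_pos h2α
      positivity
  · filter_upwards [hev, eventually_ge_atTop 1] with n hBEn hn1
    set k : ℕ := n0 n with hk
    have hkm : k + (n - k) = n := Nat.add_sub_cancel' (hle n)
    have hW := wght_le hα k (n - k)
    rw [hkm] at hW
    have hch := choose_le_exp n k hn1 (hle n)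
    have h2n : (2:ℝ)^n = Real.exp (n * Real.log 2) := by
      rw [Real.exp_nat_mul, Real.exp_log two_pos]
    set X : ℝ := (n:ℝ)+1+s with hX
    have hX0 : (0:ℝ) ≤ X := by positivity
    set BE : ℝ := Real.binEntropy ((k:ℝ)/n) with hBEd
    calc Real.exp (2*n*c^2) * wght α k (n - k)
        ≤ Real.exp (2*n*c^2) * (C * X^(s+2) * (n.choose k) / 2^n) := by
          apply mul_le_mul_of_nonneg_left hW (Real.exp_nonneg _)
      _ ≤ Real.exp (2*n*c^2) * (C * X^(s+2) * Real.exp (n * BE) / 2^n) := by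
          gcongr
      _ = C * X^(s+2) * Real.exp (2*n*c^2 + n * BE - n * Real.log 2) := by
          rw [Real.exp_sub, Real.exp_add, h2n]
          ring
      _ ≤ C * X^(s+2) * Real.exp ((n:ℝ) * (-(ε/2))) := by
          apply mul_le_mul_of_nonneg_left _ (by positivity)
          apply Real.exp_le_exp.mpr
          have hfac : 2*c^2 + BE - Real.log 2 ≤ -(ε/2) := by
            simp only [hε]
            linarith [hBEn]
          have hn0 : (0:ℝ) ≤ n := Nat.cast_nonneg n
          nlinarith [mul_le_mul_of_nonneg_left hfac hn0]
      _ = C * (X^(s+2) * ρ^n) := by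
          rw [hρ, ← Real.exp_nat_mul]
          ring_nf
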